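/- Fix ℓ, N ∈ ℕ, a subset J ⊆ {1,…,N}, and functions f₁,…,f_ℓ : {1,…,N} → ℂ each with ∑_{i=1}^{N} f_λ(i) = 0. Put f(i₁,…,i_ℓ) = f₁(i₁)⋯f_ℓ(i_ℓ). Then |∑ f(i₁,…,i_ℓ)|, summed over all tuples of distinct indices i₁,…,i_ℓ ∈ {1,…,N} \ J, is bounded by ℓ^{2ℓ} times the sum of |f(i)| over all i ∈ {1,…,N}^ℓ with the property that every value appearing exactly once in i belongs to J. -/

import Mathlib

open Finset

variable {ℓ N : ℕ}

lemma sign_sum_injective {ℓ N : ℕ} (i : Fin ℓ → Fin N) :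
    (if Function.Injective i then (1:ℂ) else 0)
      = ∑ σ : Equiv.Perm (Fin ℓ), if i ∘ σ = i then ((Equiv.Perm.sign σ : ℤ) : ℂ) else 0 := by
  by_cases h : Function.Injective i
  · rw [if_pos h, Finset.sum_eq_single (1 : Equiv.Perm (Fin ℓ))]
    · simp
    · intro σ _ hσ
      rw [if_neg]
      intro hc
      exact hσ (Equiv.ext fun l => h (congrFun hc l))
    · simp
  · rw [if_neg h]
    obtain ⟨a, b, hab, hne⟩ := Function.not_injective_iff.mp h
    set τ := Equiv.swap a b with hτ
    have hiτ : i ∘ τ = i := by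
      funext l
      simp only [Function.comp_apply, hτ]
      rcases eq_or_ne l a with rfl | hla
      · rw [Equiv.swap_apply_left]; exact hab.symm
      rcases eq_or_ne l b with rfl | hlb
      · rw [Equiv.swap_apply_right]; exact hab
      · rw [Equiv.swap_apply_of_ne_of_ne hla hlb]
    have key : ∑ σ : Equiv.Perm (Fin ℓ), (if i ∘ σ = i then ((Equiv.Perm.sign σ : ℤ) : ℂ) else 0)
        = - ∑ σ : Equiv.Perm (Fin ℓ), (if i ∘ σ = i then ((Equiv.Perm.sign σ : ℤ) : ℂ) else 0) := by
      nth_rewrite 1 [← Fintype.sum_equiv (Equiv.mulLeft τ)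
        (fun σ => if i ∘ σ = i then -((Equiv.Perm.sign σ : ℤ) : ℂ) else 0)
        (fun σ => if i ∘ σ = i then ((Equiv.Perm.sign σ : ℤ) : ℂ) else 0) ?_]
      · rw [← Finset.sum_neg_distrib]
        apply Finset.sum_congr rfl
        intro σ _
        split <;> simp
      · intro σ
        have hcomp : i ∘ ⇑(Equiv.mulLeft τ σ) = i ∘ ⇑σ := by
          show i ∘ ⇑(τ * σ) = i ∘ ⇑σ
          funext l
          exact congrFun hiτ (σ l)
        have hsgn : Equiv.Perm.sign (Equiv.mulLeft τ σ) = - Equiv.Perm.sign σ := by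
          show Equiv.Perm.sign (τ * σ) = _
          rw [map_mul, Equiv.Perm.sign_swap hne]
          simp
        rw [hcomp, hsgn]
        push_cast
        split <;> simp
    linear_combination (-1/2 : ℂ) * key

def σmap (σ : Equiv.Perm (Fin ℓ)) (l : {l : Fin ℓ // σ l ≠ l}) : {l : Fin ℓ // σ l ≠ l} :=
  ⟨σ l.1, fun h => l.2 (σ.injective h)⟩

lemma split_sum (J : Finset (Fin N)) (f : Fin ℓ → Fin N → ℂ) (σ : Equiv.Perm (Fin ℓ))
    (A : Finset (Fin N)) :
    ∑ i : Fin ℓ → Fin N,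
        (if ((∀ l, σ l = l → i l ∈ A) ∧ (∀ l, σ l ≠ l → i l ∉ J) ∧ i ∘ σ = i)
          then ∏ l, f l (i l) else 0)
    = (∏ l : {l : Fin ℓ // σ l = l}, ∑ j ∈ A, f l.1 j) *
      ∑ h : {l : Fin ℓ // σ l ≠ l} → Fin N,
        (if ((∀ l, h l ∉ J) ∧ ∀ l, h (σmap σ l) = h l)
          then ∏ l, f l.1 (h l) else 0) := by
  classical
  set e := (Equiv.piEquivPiSubtypeProd (fun l : Fin ℓ => σ l = l) (fun _ => Fin N)).symm with he
  rw [← Equiv.sum_comp e]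
  rw [Fintype.sum_prod_type]
  have hfix : ∀ (g : {l : Fin ℓ // σ l = l} → Fin N) (h : {l : Fin ℓ // ¬ σ l = l} → Fin N)
      (l : {l : Fin ℓ // σ l = l}), e (g, h) l.1 = g l := by
    intro g h l
    simp only [he, Equiv.piEquivPiSubtypeProd_symm_apply]
    rw [dif_pos l.2]
  have hnfix : ∀ (g : {l : Fin ℓ // σ l = l} → Fin N) (h : {l : Fin ℓ // ¬ σ l = l} → Fin N)
      (l : {l : Fin ℓ // ¬ σ l = l}), e (g, h) l.1 = h l := by
    intro g h l
    simp only [he, Equiv.piEquivPiSubtypeProd_symm_apply]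
    rw [dif_neg l.2]
  have step : ∀ (g : {l : Fin ℓ // σ l = l} → Fin N) (h : {l : Fin ℓ // ¬ σ l = l} → Fin N),
      (if ((∀ l, σ l = l → e (g, h) l ∈ A) ∧ (∀ l, σ l ≠ l → e (g, h) l ∉ J)
          ∧ e (g, h) ∘ σ = e (g, h)) then ∏ l, f l (e (g, h) l) else 0)
      = (if (∀ l, g l ∈ A) then ∏ l : {l : Fin ℓ // σ l = l}, f l.1 (g l) else 0)
        * (if ((∀ l, h l ∉ J) ∧ ∀ l, h (σmap σ l) = h l)
            then ∏ l : {l : Fin ℓ // ¬ σ l = l}, f l.1 (h l) else 0) := by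
    intro g h
    have hc1 : (∀ l, σ l = l → e (g, h) l ∈ A) ↔ (∀ l, g l ∈ A) := by
      constructor
      · intro H l
        have := H l.1 l.2
        rwa [hfix g h l] at this
      · intro H l hl
        rw [show e (g, h) l = g ⟨l, hl⟩ from hfix g h ⟨l, hl⟩]
        exact H _
    have hc2 : (∀ l, σ l ≠ l → e (g, h) l ∉ J) ↔ (∀ l, h l ∉ J) := by
      constructor
      · intro H l
        have := H l.1 l.2
        rwa [hnfix g h l] at this
      · intro H l hl
        rw [show e (g, h) l = h ⟨l, hl⟩ from hnfix g h ⟨l, hl⟩]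
        exact H _
    have hc3 : (e (g, h) ∘ σ = e (g, h)) ↔ (∀ l, h (σmap σ l) = h l) := by
      constructor
      · intro H l
        have := congrFun H l.1
        simp only [Function.comp_apply] at this
        rwa [show e (g, h) (σ l.1) = h (σmap σ l) from hnfix g h (σmap σ l),
          hnfix g h l] at this
      · intro H
        funext l
        simp only [Function.comp_apply]
        by_cases hl : σ l = l
        · rw [hl]
        · rw [show e (g, h) (σ l) = h (σmap σ ⟨l, hl⟩) from hnfix g h (σmap σ ⟨l, hl⟩),
            hnfix g h ⟨l, hl⟩]
          exact H ⟨l, hl⟩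
    have hprod : ∏ l, f l (e (g, h) l)
        = (∏ l : {l : Fin ℓ // σ l = l}, f l.1 (g l))
          * ∏ l : {l : Fin ℓ // ¬ σ l = l}, f l.1 (h l) := by
      rw [← Fintype.prod_subtype_mul_prod_subtype (fun l : Fin ℓ => σ l = l)
        (fun l => f l (e (g, h) l))]
      congr 1
      · exact Fintype.prod_congr _ _ fun l => by rw [hfix g h l]
      · exact Fintype.prod_congr _ _ fun l => by rw [hnfix g h l]
    rw [if_congr (and_congr hc1 (and_congr hc2 hc3)) rfl rfl, if_congr Iff.rfl hprod rfl,
      ite_zero_mul_ite_zero]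
  calc ∑ g : {l : Fin ℓ // σ l = l} → Fin N, ∑ h : {l : Fin ℓ // ¬ σ l = l} → Fin N,
        (if ((∀ l, σ l = l → e (g, h) l ∈ A) ∧ (∀ l, σ l ≠ l → e (g, h) l ∉ J)
            ∧ e (g, h) ∘ σ = e (g, h)) then ∏ l, f l (e (g, h) l) else 0)
      = ∑ g : {l : Fin ℓ // σ l = l} → Fin N, ∑ h : {l : Fin ℓ // ¬ σ l = l} → Fin N,
        (if (∀ l, g l ∈ A) then ∏ l : {l : Fin ℓ // σ l = l}, f l.1 (g l) else 0)
          * (if ((∀ l, h l ∉ J) ∧ ∀ l, h (σmap σ l) = h l)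
              then ∏ l : {l : Fin ℓ // ¬ σ l = l}, f l.1 (h l) else 0) := by
        exact Finset.sum_congr rfl fun g _ => Finset.sum_congr rfl fun h _ => step g h
    _ = (∑ g : {l : Fin ℓ // σ l = l} → Fin N,
          if (∀ l, g l ∈ A) then ∏ l : {l : Fin ℓ // σ l = l}, f l.1 (g l) else 0)
        * ∑ h : {l : Fin ℓ // σ l ≠ l} → Fin N,
          (if ((∀ l, h l ∉ J) ∧ ∀ l, h (σmap σ l) = h l)
            then ∏ l, f l.1 (h l) else 0) := by
        rw [Finset.sum_mul_sum]
    _ = (∏ l : {l : Fin ℓ // σ l = l}, ∑ j ∈ A, f l.1 j) *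
        ∑ h : {l : Fin ℓ // σ l ≠ l} → Fin N,
          (if ((∀ l, h l ∉ J) ∧ ∀ l, h (σmap σ l) = h l)
            then ∏ l, f l.1 (h l) else 0) := by
        congr 1
        rw [Finset.prod_univ_sum (t := fun _ : {l : Fin ℓ // σ l = l} => A)
          (f := fun (l : {l : Fin ℓ // σ l = l}) j => f l.1 j)]
        rw [← Finset.sum_filter]
        apply Finset.sum_congr
        · ext g
          simp [Fintype.mem_piFinset]
        · intro g _; rfl

lemma inner_bound (J : Finset (Fin N)) (f : Fin ℓ → Fin N → ℂ)
    (hf : ∀ l, ∑ j, f l j = 0) (σ : Equiv.Perm (Fin ℓ)) :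
    ‖∑ i : Fin ℓ → Fin N, (if ((∀ l, i l ∉ J) ∧ i ∘ σ = i) then ∏ l, f l (i l) else 0)‖
      ≤ ∑ i : Fin ℓ → Fin N,
          if ∀ v : Fin N, (Finset.univ.filter fun l => i l = v).card = 1 → v ∈ J
          then ‖∏ l, f l (i l)‖ else 0 := by
  classical
  have hcompl : ∀ l : Fin ℓ, ∑ j ∈ Jᶜ, f l j = - ∑ j ∈ J, f l j := by
    intro l
    have := Finset.sum_add_sum_compl J (f l)
    rw [hf l] at this
    linear_combination this
  have h1 : ∑ i : Fin ℓ → Fin N, (if ((∀ l, i l ∉ J) ∧ i ∘ σ = i) then ∏ l, f l (i l) else 0)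
      = (∏ l : {l : Fin ℓ // σ l = l}, ∑ j ∈ Jᶜ, f l.1 j) *
        ∑ h : {l : Fin ℓ // σ l ≠ l} → Fin N,
          (if ((∀ l, h l ∉ J) ∧ ∀ l, h (σmap σ l) = h l) then ∏ l, f l.1 (h l) else 0) := by
    rw [← split_sum J f σ Jᶜ]
    apply Finset.sum_congr rfl
    intro i _
    apply if_congr _ rfl rfl
    simp only [Finset.mem_compl]
    constructor
    · rintro ⟨ha, hb⟩
      exact ⟨fun l _ => ha l, fun l _ => ha l, hb⟩
    · rintro ⟨ha, hb, hc⟩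
      refine ⟨fun l => ?_, hc⟩
      by_cases hl : σ l = l
      · exact ha l hl
      · exact hb l hl
  have h2 : ∑ i : Fin ℓ → Fin N,
        (if ((∀ l, σ l = l → i l ∈ J) ∧ (∀ l, σ l ≠ l → i l ∉ J) ∧ i ∘ σ = i)
          then ∏ l, f l (i l) else 0)
      = (∏ l : {l : Fin ℓ // σ l = l}, ∑ j ∈ J, f l.1 j) *
        ∑ h : {l : Fin ℓ // σ l ≠ l} → Fin N,
          (if ((∀ l, h l ∉ J) ∧ ∀ l, h (σmap σ l) = h l) then ∏ l, f l.1 (h l) else 0) :=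
    split_sum J f σ J
  have hnorm : ‖∑ i : Fin ℓ → Fin N,
        (if ((∀ l, i l ∉ J) ∧ i ∘ σ = i) then ∏ l, f l (i l) else 0)‖
      = ‖∑ i : Fin ℓ → Fin N,
        (if ((∀ l, σ l = l → i l ∈ J) ∧ (∀ l, σ l ≠ l → i l ∉ J) ∧ i ∘ σ = i)
          then ∏ l, f l (i l) else 0)‖ := by
    rw [h1, h2, norm_mul, norm_mul]
    congr 1
    rw [norm_prod, norm_prod]
    apply Finset.prod_congr rfl
    intro l _
    rw [hcompl l.1, norm_neg]
  rw [hnorm]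
  refine le_trans (norm_sum_le _ _) ?_
  apply Finset.sum_le_sum
  intro i _
  rcases (em ((∀ l, σ l = l → i l ∈ J) ∧ (∀ l, σ l ≠ l → i l ∉ J) ∧ i ∘ σ = i)) with hc | hc
  · have hw : ∀ v : Fin N, (Finset.univ.filter fun l => i l = v).card = 1 → v ∈ J := by
      intro v hv
      rw [Finset.card_eq_one] at hv
      obtain ⟨l, hl⟩ := hv
      have hlv : i l = v := by
        have : l ∈ Finset.univ.filter fun l => i l = v := hl ▸ Finset.mem_singleton_self l
        exact (Finset.mem_filter.mp this).2
      have huniq : ∀ l', i l' = v → l' = l := by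
        intro l' hl'
        have : l' ∈ Finset.univ.filter fun l => i l = v :=
          Finset.mem_filter.mpr ⟨Finset.mem_univ _, hl'⟩
        rwa [hl, Finset.mem_singleton] at this
      have hσl : σ l = l := by
        apply huniq
        have hcf := congrFun hc.2.2 l
        simp only [Function.comp_apply] at hcf
        rw [hcf, hlv]
      rw [← hlv]
      exact hc.1 l hσl
    rw [if_pos hc, if_pos hw]
  · rw [if_neg hc, norm_zero]
    split_ifs
    · exact norm_nonneg _
    · exact le_refl 0


/-- For functions `f₁,…,f_ℓ : {1,…,N} → ℂ` each summing to zero and `J ⊆ {1,…,N}`, the sum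
of `f(i) = ∏ f_λ(i_λ)` over tuples of distinct indices avoiding `J` is bounded in absolute
value by `ℓ^{2ℓ}` times the sum of `|f(i)|` over tuples in which every value appearing
exactly once belongs to `J`. -/
theorem stmt_8 (ℓ N : ℕ) (J : Finset (Fin N)) (f : Fin ℓ → Fin N → ℂ)
    (hf : ∀ l, ∑ j, f l j = 0) :
    ‖∑ i : Fin ℓ → Fin N,
        if Function.Injective i ∧ ∀ l, i l ∉ J then ∏ l, f l (i l) else 0‖
      ≤ (ℓ : ℝ) ^ (2 * ℓ) *
        ∑ i : Fin ℓ → Fin N,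
          if ∀ v : Fin N, (Finset.univ.filter fun l => i l = v).card = 1 → v ∈ J
          then ‖∏ l, f l (i l)‖ else 0 := by
  classical
  set T := ∑ i : Fin ℓ → Fin N,
      if ∀ v : Fin N, (Finset.univ.filter fun l => i l = v).card = 1 → v ∈ J
      then ‖∏ l, f l (i l)‖ else 0 with hT
  have hT0 : 0 ≤ T := by
    rw [hT]
    apply Finset.sum_nonneg
    intro i _
    split_ifs
    · exact norm_nonneg _
    · exact le_refl 0
  have hrw : ∑ i : Fin ℓ → Fin N,
        (if Function.Injective i ∧ ∀ l, i l ∉ J then ∏ l, f l (i l) else 0)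
      = ∑ σ : Equiv.Perm (Fin ℓ), ((Equiv.Perm.sign σ : ℤ) : ℂ) *
          ∑ i : Fin ℓ → Fin N, (if ((∀ l, i l ∉ J) ∧ i ∘ σ = i) then ∏ l, f l (i l) else 0) := by
    have e1 : ∀ i : Fin ℓ → Fin N,
        (if Function.Injective i ∧ ∀ l, i l ∉ J then ∏ l, f l (i l) else 0)
        = ∑ σ : Equiv.Perm (Fin ℓ), ((Equiv.Perm.sign σ : ℤ) : ℂ) *
            (if ((∀ l, i l ∉ J) ∧ i ∘ σ = i) then ∏ l, f l (i l) else 0) := by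
      intro i
      have : (if Function.Injective i ∧ ∀ l, i l ∉ J then ∏ l, f l (i l) else 0)
          = (if Function.Injective i then (1:ℂ) else 0) *
            (if (∀ l, i l ∉ J) then ∏ l, f l (i l) else 0) := by
        rw [ite_zero_mul_ite_zero, one_mul]
      rw [this, sign_sum_injective i, Finset.sum_mul]
      apply Finset.sum_congr rfl
      intro σ _
      rw [ite_zero_mul_ite_zero]
      rw [mul_ite, mul_zero]
      apply if_congr (and_comm) rfl rfl
    rw [Finset.sum_congr rfl fun i _ => e1 i, Finset.sum_comm]
    apply Finset.sum_congr rfl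
    intro σ _
    rw [Finset.mul_sum]
  rw [hrw]
  have hbound : ‖∑ σ : Equiv.Perm (Fin ℓ), ((Equiv.Perm.sign σ : ℤ) : ℂ) *
        ∑ i : Fin ℓ → Fin N, (if ((∀ l, i l ∉ J) ∧ i ∘ σ = i) then ∏ l, f l (i l) else 0)‖
      ≤ ∑ σ : Equiv.Perm (Fin ℓ), T := by
    refine le_trans (norm_sum_le _ _) (Finset.sum_le_sum ?_)
    intro σ _
    rw [norm_mul]
    have hs : ‖((Equiv.Perm.sign σ : ℤ) : ℂ)‖ = 1 := by
      rcases Int.units_eq_one_or (Equiv.Perm.sign σ) with h | h <;> rw [h] <;> simp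
    rw [hs, one_mul]
    exact inner_bound J f hf σ
  refine le_trans hbound ?_
  rw [Finset.sum_const, Finset.card_univ, Fintype.card_perm, Fintype.card_fin, nsmul_eq_mul]
  apply mul_le_mul_of_nonneg_right _ hT0
  have h1 : (ℓ.factorial : ℝ) ≤ (ℓ : ℝ) ^ ℓ := by
    exact_mod_cast Nat.factorial_le_pow ℓ
  refine le_trans h1 ?_
  rcases Nat.eq_zero_or_pos ℓ with rfl | hl
  · norm_num
  · have : (ℓ : ℝ) ^ ℓ ≤ (ℓ : ℝ) ^ (2 * ℓ) := by
      apply pow_le_pow_right₀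
      · exact_mod_cast hl
      · omega
    exact this
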